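/- Fix integers k ≥ 0 and d ≥ 1. Let 𝒦 be a collection of ℝ^d-LMMCs that is compact with respect to the topology induced by the pseudometric d_WL^(k), and let f : 𝒦 → ℝ be continuous with respect to this pseudometric (so in particular f((𝒳,ℓ_X)) = f((𝒴,ℓ_Y)) whenever d_WL^(k)((𝒳,ℓ_X),(𝒴,ℓ_Y)) = 0). Then for every ε > 0 there exists a k-layer Markov chain neural network h ∈ 𝒩𝒩_k(ℝ^d) such that |h((𝒳,ℓ_X)) − f((𝒳,ℓ_X))| < ε for every (𝒳,ℓ_X) ∈ 𝒦; i.e., the restrictions of functions in 𝒩𝒩_k(ℝ^d) to 𝒦 are uniformly dense in the continuous real functions on 𝒦. -/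

import Mathlib

open scoped BigOperators NNReal

namespace WLGW

variable {X Y W : Type*}

/-- A probability mass function on a finite type. -/
def IsPMF [Fintype X] (p : X → ℝ) : Prop :=
  (∀ x, 0 ≤ p x) ∧ ∑ x, p x = 1

/-- `γ` is a coupling of `p` and `q`. -/
def IsCoupling [Fintype X] [Fintype Y] (p : X → ℝ) (q : Y → ℝ) (γ : X → Y → ℝ) : Prop :=
  (∀ x y, 0 ≤ γ x y) ∧ (∀ x, ∑ y, γ x y = p x) ∧ (∀ y, ∑ x, γ x y = q y)

/-- `(m, μ)` is a measure Markov chain: each `m x` is a pmf, and `μ` is a fully supported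
stationary pmf. -/
def IsMMC [Fintype X] (m : X → X → ℝ) (μ : X → ℝ) : Prop :=
  (∀ x, IsPMF (m x)) ∧ IsPMF μ ∧ (∀ x, 0 < μ x) ∧ (∀ x', ∑ x, m x x' * μ x = μ x')

/-- `dX` is a metric on the finite type `X`. -/
def IsMetricOn [Fintype X] (dX : X → X → ℝ) : Prop :=
  (∀ x, dX x x = 0) ∧ (∀ x y, dX x y = dX y x) ∧ (∀ x y, x ≠ y → 0 < dX x y) ∧
    (∀ x y z, dX x z ≤ dX x y + dX y z)

/-- The iterated Weisfeiler–Lehman cost `D_k`. -/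
noncomputable def costIter [Fintype X] [Fintype Y] (mX : X → X → ℝ) (mY : Y → Y → ℝ)
    (D0 : X → Y → ℝ) : ℕ → X → Y → ℝ
  | 0 => D0
  | k + 1 => fun x y => sInf {r : ℝ | ∃ γ : X → Y → ℝ, IsCoupling (mX x) (mY y) γ ∧
      r = ∑ x', ∑ y', costIter mX mY D0 k x' y' * γ x' y'}

/-- The Weisfeiler–Lehman distance of depth `k` between two labeled measure Markov chains. -/
noncomputable def dWL {Z : Type*} [PseudoMetricSpace Z] [Fintype X] [Fintype Y]
    (mX : X → X → ℝ) (μX : X → ℝ) (ℓX : X → Z)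
    (mY : Y → Y → ℝ) (μY : Y → ℝ) (ℓY : Y → Z) (k : ℕ) : ℝ :=
  sInf {r : ℝ | ∃ γ : X → Y → ℝ, IsCoupling μX μY γ ∧
      r = ∑ x, ∑ y, costIter mX mY (fun x y => dist (ℓX x) (ℓY y)) k x y * γ x y}

/-- The absolute Weisfeiler–Lehman distance. -/
noncomputable def dWLsup {Z : Type*} [PseudoMetricSpace Z] [Fintype X] [Fintype Y]
    (mX : X → X → ℝ) (μX : X → ℝ) (ℓX : X → Z)
    (mY : Y → Y → ℝ) (μY : Y → ℝ) (ℓY : Y → Z) : ℝ :=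
  ⨆ k : ℕ, dWL mX μX ℓX mY μY ℓY k

/-- Isomorphism of labeled measure Markov chains. -/
def LMMCIso {Z : Type*} [Fintype X] [Fintype Y]
    (mX : X → X → ℝ) (μX : X → ℝ) (ℓX : X → Z)
    (mY : Y → Y → ℝ) (μY : Y → ℝ) (ℓY : Y → Z) : Prop :=
  ∃ ψ : X ≃ Y, (∀ x, ℓY (ψ x) = ℓX x) ∧ (∀ x x', mY (ψ x) (ψ x') = mX x x') ∧
    (∀ x, μY (ψ x) = μX x)

/-- The `q`-Markov kernel of a finite simple graph. -/
noncomputable def graphKernel {V : Type*} [Fintype V] [DecidableEq V] (G : SimpleGraph V) [DecidableRel G.Adj]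
    (q : ℝ) (v v' : V) : ℝ :=
  if G.degree v = 0 then (if v' = v then 1 else 0)
  else (if v' = v then q else 0) + (if G.Adj v v' then (1 - q) / (G.degree v : ℝ) else 0)

/-- The stationary degree measure of a finite simple graph. -/
noncomputable def graphMu {V : Type*} [Fintype V] (G : SimpleGraph V) [DecidableRel G.Adj]
    (v : V) : ℝ :=
  ((max (G.degree v) 1 : ℕ) : ℝ) / ∑ v', ((max (G.degree v') 1 : ℕ) : ℝ)

/-- The type of depth-`k` Weisfeiler–Lehman labels over an initial label set `Z`. -/
def WLType (Z : Type*) : ℕ → Type _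
  | 0 => Z
  | k + 1 => WLType Z k × Multiset (WLType Z k)

/-- The Weisfeiler–Lehman label hierarchy `ℓ^k` of a labeled graph. -/
def wlLabel {V Z : Type*} [Fintype V] (G : SimpleGraph V) [DecidableRel G.Adj] (ℓ : V → Z) :
    (k : ℕ) → V → WLType Z k
  | 0 => ℓ
  | k + 1 => fun v => (wlLabel G ℓ k v, (G.neighborFinset v).val.map (wlLabel G ℓ k))

/-- The multiset `L_k((G, ℓ))` of depth-`k` WL labels of all vertices. -/
def wlMultiset {V Z : Type*} [Fintype V] (G : SimpleGraph V) [DecidableRel G.Adj]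
    (ℓ : V → Z) (k : ℕ) : Multiset (WLType Z k) :=
  Finset.univ.val.map (wlLabel G ℓ k)

/-- The WL test distinguishes two labeled graphs. -/
def WLDistinguishes {V₁ V₂ Z : Type*} [Fintype V₁] [Fintype V₂]
    (G₁ : SimpleGraph V₁) [DecidableRel G₁.Adj] (ℓ₁ : V₁ → Z)
    (G₂ : SimpleGraph V₂) [DecidableRel G₂.Adj] (ℓ₂ : V₂ → Z) : Prop :=
  ∃ k, wlMultiset G₁ ℓ₁ k ≠ wlMultiset G₂ ℓ₂ k

/-- The relabeling `ℓ^g(v) = g(ℓ(v), deg v, |V|)`. -/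
def relabel {V Z Z₁ : Type*} [Fintype V] (G : SimpleGraph V) [DecidableRel G.Adj]
    (ℓ : V → Z) (g : Z × ℕ × ℕ → Z₁) : V → Z₁ :=
  fun v => g (ℓ v, G.degree v, Fintype.card V)

/-- `kpow m k = m^{⊗k}`, the `k`-step Markov kernel (`kpow m 0` is the identity kernel). -/
def kpow [Fintype X] [DecidableEq X] (m : X → X → ℝ) : ℕ → X → X → ℝ
  | 0 => fun x x' => if x' = x then 1 else 0
  | k + 1 => fun x x'' => ∑ x', kpow m k x' x'' * m x x'

/-- The Wasserstein distance between the pushforwards `(ℓX)_# p` and `(ℓY)_# q`, expressed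
through couplings of `p` and `q`. -/
noncomputable def wassersteinCost {Z : Type*} [PseudoMetricSpace Z] [Fintype X] [Fintype Y]
    (ℓX : X → Z) (ℓY : Y → Z) (p : X → ℝ) (q : Y → ℝ) : ℝ :=
  sInf {r : ℝ | ∃ γ : X → Y → ℝ, IsCoupling p q γ ∧
      r = ∑ x, ∑ y, dist (ℓX x) (ℓY y) * γ x y}

/-- The lower bound `d_WLLB^(k)` for the WL distance. -/
noncomputable def dWLLB {Z : Type*} [PseudoMetricSpace Z] [Fintype X] [Fintype Y]
    [DecidableEq X] [DecidableEq Y]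
    (mX : X → X → ℝ) (μX : X → ℝ) (ℓX : X → Z)
    (mY : Y → Y → ℝ) (μY : Y → ℝ) (ℓY : Y → Z) (k : ℕ) : ℝ :=
  sInf {r : ℝ | ∃ γ : X → Y → ℝ, IsCoupling μX μY γ ∧
      r = ∑ x, ∑ y, wassersteinCost ℓX ℓY (kpow mX k x) (kpow mY k y) * γ x y}

/-- Dimension sequence of an MCNN: `mcnnDim d dims 0 = d`, then `dims`. -/
def mcnnDim (d : ℕ) (dims : ℕ → ℕ) : ℕ → ℕ
  | 0 => d
  | i + 1 => dims i

/-- A `k`-layer Markov chain neural network on `ℝ^d`-LMMCs: Lipschitz maps `φ_1, …, φ_{k+1}`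
followed by a continuous map `ψ`. -/
structure MCNN (d k : ℕ) where
  dims : ℕ → ℕ
  φ : (i : ℕ) → EuclideanSpace ℝ (Fin (mcnnDim d dims i)) →
      EuclideanSpace ℝ (Fin (mcnnDim d dims (i + 1)))
  φ_lip : ∀ i, ∃ K : ℝ≥0, LipschitzWith K (φ i)
  ψ : EuclideanSpace ℝ (Fin (mcnnDim d dims (k + 1))) → ℝ
  ψ_cont : Continuous ψ

/-- Labels after `j` layers of an MCNN (the map `F_{φ_j} ∘ ⋯ ∘ F_{φ_1}`). -/
noncomputable def mcnnLabel {X : Type*} [Fintype X] {d k : ℕ} (N : MCNN d k)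
    (m : X → X → ℝ) (ℓ : X → EuclideanSpace ℝ (Fin d)) :
    (j : ℕ) → X → EuclideanSpace ℝ (Fin (mcnnDim d N.dims j))
  | 0 => ℓ
  | j + 1 => fun x => ∑ x', m x x' • N.φ j (mcnnLabel N m ℓ j x')

/-- Evaluation of an MCNN on an `ℝ^d`-LMMC: `ψ ∘ S_{φ_{k+1}} ∘ F_{φ_k} ∘ ⋯ ∘ F_{φ_1}`. -/
noncomputable def mcnnEval {X : Type*} [Fintype X] {d k : ℕ} (N : MCNN d k)
    (m : X → X → ℝ) (μ : X → ℝ) (ℓ : X → EuclideanSpace ℝ (Fin d)) : ℝ :=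
  N.ψ (∑ x, μ x • N.φ k (mcnnLabel N m ℓ k x))

/-- `k`-step couplings between the Markov kernels `mX` and `mY` (defined for `k ≥ 1`). -/
def IsStepCoupling [Fintype X] [Fintype Y] (mX : X → X → ℝ) (mY : Y → Y → ℝ) :
    ℕ → (X → Y → X → Y → ℝ) → Prop
  | 0, _ => False
  | 1, ν => ∀ x y, IsCoupling (mX x) (mY y) (ν x y)
  | k + 2, ν => ∃ νk ν1 : X → Y → X → Y → ℝ,
      IsStepCoupling mX mY (k + 1) νk ∧ (∀ x y, IsCoupling (mX x) (mY y) (ν1 x y)) ∧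
      ν = fun x y x' y' => ∑ x'', ∑ y'', νk x'' y'' x' y' * ν1 x y x'' y''

/-- The `k`-distortion `dis^(k)(γ, ν)`. -/
def disk [Fintype X] [Fintype Y] (dX : X → X → ℝ) (dY : Y → Y → ℝ)
    (γ : X → Y → ℝ) (ν : X → Y → X → Y → ℝ) : ℝ :=
  ∑ x, ∑ y, ∑ x'', ∑ y'', ∑ x', ∑ y',
    |dX x x' - dY y y'| * ν x'' y'' x' y' * γ x'' y'' * γ x y

/-- The `k`-Gromov–Wasserstein distance between Markov chain metric spaces. -/
noncomputable def dGWk [Fintype X] [Fintype Y]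
    (mX : X → X → ℝ) (dX : X → X → ℝ) (μX : X → ℝ)
    (mY : Y → Y → ℝ) (dY : Y → Y → ℝ) (μY : Y → ℝ) (k : ℕ) : ℝ :=
  sInf {r : ℝ | ∃ (γ : X → Y → ℝ) (ν : X → Y → X → Y → ℝ),
      IsCoupling μX μY γ ∧ IsStepCoupling mX mY k ν ∧ r = disk dX dY γ ν}

/-- The absolute Gromov–Wasserstein distance between MCMSs: `sup_{k ≥ 1} d_GW^(k)`. -/
noncomputable def dGWMCMS [Fintype X] [Fintype Y]
    (mX : X → X → ℝ) (dX : X → X → ℝ) (μX : X → ℝ)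
    (mY : Y → Y → ℝ) (dY : Y → Y → ℝ) (μY : Y → ℝ) : ℝ :=
  ⨆ k : ℕ, dGWk mX dX μX mY dY μY (k + 1)

/-- Isomorphism of Markov chain metric spaces. -/
def MCMSIso [Fintype X] [Fintype Y]
    (mX : X → X → ℝ) (dX : X → X → ℝ) (μX : X → ℝ)
    (mY : Y → Y → ℝ) (dY : Y → Y → ℝ) (μY : Y → ℝ) : Prop :=
  ∃ ψ : X ≃ Y, (∀ x x', dY (ψ x) (ψ x') = dX x x') ∧
    (∀ x x', mY (ψ x) (ψ x') = mX x x') ∧ (∀ x, μY (ψ x) = μX x)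

/-- The decoupled Gromov–Wasserstein distance between finite metric measure spaces. -/
noncomputable def dGWbi [Fintype X] [Fintype Y]
    (dX : X → X → ℝ) (μX : X → ℝ) (dY : Y → Y → ℝ) (μY : Y → ℝ) : ℝ :=
  sInf {r : ℝ | ∃ γ γ' : X → Y → ℝ, IsCoupling μX μY γ ∧ IsCoupling μX μY γ' ∧
      r = ∑ x, ∑ y, ∑ x', ∑ y', |dX x x' - dY y y'| * γ' x' y' * γ x y}

/-- `k`-step couplings between the measures `μX` and `μY`
(`k = 0` gives ordinary couplings). -/
def IsMeasureStepCoupling [Fintype X] [Fintype Y] (mX : X → X → ℝ) (mY : Y → Y → ℝ)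
    (μX : X → ℝ) (μY : Y → ℝ) : ℕ → (X → Y → ℝ) → Prop
  | 0, γ => IsCoupling μX μY γ
  | k + 1, γk => ∃ (γ : X → Y → ℝ) (ν : X → Y → X → Y → ℝ),
      IsCoupling μX μY γ ∧ IsStepCoupling mX mY (k + 1) ν ∧
      γk = fun x' y' => ∑ x, ∑ y, ν x y x' y' * γ x y

/-- The WWL label iteration. -/
noncomputable def wwlLabel {V : Type*} [Fintype V] {d : ℕ} (G : SimpleGraph V)
    [DecidableRel G.Adj] (ℓ : V → EuclideanSpace ℝ (Fin d)) :
    ℕ → V → EuclideanSpace ℝ (Fin d)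
  | 0 => ℓ
  | i + 1 => fun v => (1 / 2 : ℝ) •
      (wwlLabel G ℓ i v + ((G.degree v : ℝ))⁻¹ • ∑ v' ∈ G.neighborFinset v, wwlLabel G ℓ i v')

/-- The stacked WWL label `L^k_G = (ℓ^0, …, ℓ^k)`, valued in Euclidean `ℝ^{d(k+1)}`. -/
noncomputable def stackedLabel {V : Type*} [Fintype V] {d : ℕ} (G : SimpleGraph V)
    [DecidableRel G.Adj] (ℓ : V → EuclideanSpace ℝ (Fin d)) (k : ℕ) (v : V) :
    EuclideanSpace ℝ (Fin (k + 1) × Fin d) :=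
  WithLp.toLp 2 (fun p : Fin (k + 1) × Fin d => wwlLabel G ℓ (p.1 : ℕ) v p.2)

section Helpers


lemma sInf_eq_zero_of {S : Set ℝ} (h0 : (0:ℝ) ∈ S) (hpos : ∀ r ∈ S, 0 ≤ r) : sInf S = 0 :=
  le_antisymm (csInf_le ⟨0, fun r hr => hpos r hr⟩ h0) (le_csInf ⟨0, h0⟩ hpos)

lemma le_mul_csInf {S : Set ℝ} (hne : S.Nonempty) {a c : ℝ} (hc : 0 ≤ c)
    (h : ∀ r ∈ S, a ≤ c * r) : a ≤ c * sInf S := by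
  rcases hc.eq_or_lt with h0 | h0
  · obtain ⟨r, hr⟩ := hne
    have := h r hr
    rw [← h0] at this ⊢
    simpa using this
  · have h1 : a / c ≤ sInf S :=
      le_csInf hne (fun r hr => (div_le_iff₀' h0).2 (h r hr))
    calc a = c * (a / c) := by field_simp
    _ ≤ c * sInf S := by nlinarith [h1]

lemma euclid_coord_dist_le {ι : Type*} [Fintype ι] (x y : EuclideanSpace ℝ ι) (c : ι) :
    dist (x c) (y c) ≤ dist x y := by
  rw [EuclideanSpace.dist_eq]
  have h1 : dist (x c) (y c) = Real.sqrt (dist (x c) (y c) ^ 2) :=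
    (Real.sqrt_sq dist_nonneg).symm
  rw [h1]
  exact Real.sqrt_le_sqrt (Finset.single_le_sum (f := fun i => dist (x i) (y i) ^ 2)
    (fun i _ => sq_nonneg _) (Finset.mem_univ c))

lemma euclid_lipschitz_coords {A : Type*} [PseudoMetricSpace A] {ι : Type*} [Fintype ι]
    (f : A → EuclideanSpace ℝ ι) (K : ℝ≥0)
    (h : ∀ c a b, dist (f a c) (f b c) ≤ K * dist a b) :
    LipschitzWith (NNReal.sqrt (Fintype.card ι) * K) f := by
  apply LipschitzWith.of_dist_le_mul
  intro a b
  rw [EuclideanSpace.dist_eq]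
  have h2 : ∑ c, dist (f a c) (f b c) ^ 2 ≤ (Fintype.card ι : ℝ) * ((K : ℝ) * dist a b) ^ 2 := by
    calc ∑ c, dist (f a c) (f b c) ^ 2 ≤ ∑ _c : ι, ((K : ℝ) * dist a b) ^ 2 := by
          refine Finset.sum_le_sum fun c _ => ?_
          have := h c a b
          have hnn : (0:ℝ) ≤ dist (f a c) (f b c) := dist_nonneg
          nlinarith
    _ = (Fintype.card ι : ℝ) * ((K : ℝ) * dist a b) ^ 2 := by
          rw [Finset.sum_const, Finset.card_univ, nsmul_eq_mul]
  calc Real.sqrt (∑ c, dist (f a c) (f b c) ^ 2)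
      ≤ Real.sqrt ((Fintype.card ι : ℝ) * ((K : ℝ) * dist a b) ^ 2) := Real.sqrt_le_sqrt h2
    _ = Real.sqrt (Fintype.card ι) * ((K : ℝ) * dist a b) := by
        rw [Real.sqrt_mul (by positivity), Real.sqrt_sq (by positivity)]
    _ = ↑(NNReal.sqrt (Fintype.card ι) * K) * dist a b := by
        push_cast [Real.coe_sqrt]
        ring
  
/-- Restriction of coordinates along a map, as a map of Euclidean spaces. -/
def restrictE {ι₁ ι₂ : Type*} (ρ : ι₁ → ι₂) :
    EuclideanSpace ℝ ι₂ → EuclideanSpace ℝ ι₁ := fun v => WithLp.toLp 2 (fun a => v (ρ a))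

@[simp] lemma restrictE_apply {ι₁ ι₂ : Type*} (ρ : ι₁ → ι₂) (v : EuclideanSpace ℝ ι₂) (a : ι₁) :
    restrictE ρ v a = v (ρ a) := rfl

lemma euclid_restrict_lipschitz {ι₁ ι₂ : Type*} [Fintype ι₁] [Fintype ι₂] (ρ : ι₁ → ι₂)
    (hρ : Function.Injective ρ) :
    LipschitzWith 1 (restrictE (ι₂ := ι₂) ρ) := by
  classical
  apply LipschitzWith.of_dist_le_mul
  intro v w
  rw [NNReal.coe_one, one_mul]
  rw [EuclideanSpace.dist_eq, EuclideanSpace.dist_eq]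
  apply Real.sqrt_le_sqrt
  calc (∑ a, dist (restrictE ρ v a) (restrictE ρ w a) ^ 2)
      = ∑ c ∈ Finset.univ.image ρ, dist (v c) (w c) ^ 2 := by
        rw [Finset.sum_image (fun a _ b _ hab => hρ hab)]
        simp
    _ ≤ ∑ c, dist (v c) (w c) ^ 2 :=
        Finset.sum_le_sum_of_subset_of_nonneg (Finset.subset_univ _) (fun i _ _ => sq_nonneg _)

lemma exists_sep_radius {α β : Type*} [MetricSpace β] (A : Finset α) (g : α → β)
    (hg : ∀ a ∈ A, ∀ b ∈ A, g a = g b → a = b) :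
    ∃ r : ℝ, 0 < r ∧ ∀ a ∈ A, ∀ b ∈ A, a ≠ b → 2 * r ≤ dist (g a) (g b) := by
  classical
  set D : Finset ℝ := ((A ×ˢ A).filter fun p => p.1 ≠ p.2).image
    (fun p => dist (g p.1) (g p.2)) with hD
  by_cases hne : D.Nonempty
  · refine ⟨D.min' hne / 2, ?_, ?_⟩
    · obtain ⟨⟨a, b⟩, hab', heq⟩ := Finset.mem_image.1 (D.min'_mem hne)
      rw [Finset.mem_filter, Finset.mem_product] at hab'
      obtain ⟨⟨ha, hb⟩, hab⟩ := hab'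
      have hne' : g (a, b).1 ≠ g (a, b).2 := fun h => hab (hg a ha b hb h)
      have hpos := dist_pos.2 hne'
      rw [heq] at hpos
      linarith
    · intro a ha b hb hab
      have hmem : dist (g a) (g b) ∈ D :=
        Finset.mem_image.2 ⟨(a, b), Finset.mem_filter.2
          ⟨Finset.mem_product.2 ⟨ha, hb⟩, hab⟩, rfl⟩
      have := D.min'_le _ hmem
      linarith
  · refine ⟨1, one_pos, fun a ha b hb hab => absurd ?_ hne⟩
    exact ⟨dist (g a) (g b), Finset.mem_image.2 ⟨(a, b), Finset.mem_filter.2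
      ⟨Finset.mem_product.2 ⟨ha, hb⟩, hab⟩, rfl⟩⟩

end Helpers


section Couplings
open scoped Classical

variable {X Y : Type*} [Fintype X] [Fintype Y]

lemma isCoupling_prod {p : X → ℝ} {q : Y → ℝ} (hp : IsPMF p) (hq : IsPMF q) :
    IsCoupling p q (fun x y => p x * q y) := by
  refine ⟨fun x y => mul_nonneg (hp.1 x) (hq.1 y), fun x => ?_, fun y => ?_⟩
  · rw [← Finset.mul_sum, hq.2, mul_one]
  · rw [← Finset.sum_mul, hp.2, one_mul]

lemma exists_matching_coupling {V : Type*} (TA : X → V) (TB : Y → V) (p : X → ℝ) (q : Y → ℝ)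
    (hp : ∀ x, 0 ≤ p x) (hq : ∀ y, 0 ≤ q y)
    (hmatch : ∀ v, (∑ x, if TA x = v then p x else 0) = ∑ y, if TB y = v then q y else 0) :
    ∃ γ : X → Y → ℝ, IsCoupling p q γ ∧ ∀ x y, γ x y ≠ 0 → TA x = TB y := by
  classical
  set P : V → ℝ := fun v => ∑ x, if TA x = v then p x else 0 with hP
  have hple : ∀ x, p x ≤ P (TA x) := by
    intro x
    have := Finset.single_le_sum (f := fun x' => if TA x' = TA x then p x' else 0)
      (fun x' _ => by split_ifs; exacts [hp x', le_refl 0]) (Finset.mem_univ x)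
    simpa using this
  have hqle : ∀ y, q y ≤ P (TB y) := by
    intro y
    have h2 := Finset.single_le_sum (f := fun y' => if TB y' = TB y then q y' else 0)
      (fun y' _ => by split_ifs; exacts [hq y', le_refl 0]) (Finset.mem_univ y)
    simp only [if_pos rfl] at h2
    calc q y ≤ ∑ y', if TB y' = TB y then q y' else 0 := h2
    _ = P (TB y) := (hmatch (TB y)).symm
  refine ⟨fun x y => if TA x = TB y then p x * q y / P (TA x) else 0,
    ⟨fun x y => ?_, fun x => ?_, fun y => ?_⟩, fun x y h => ?_⟩
  · dsimp only
    split_ifs with h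
    · have := hple x
      have h0 : 0 ≤ P (TA x) := le_trans (hp x) this
      exact div_nonneg (mul_nonneg (hp x) (hq y)) h0
    · exact le_refl 0
  · by_cases hP0 : P (TA x) = 0
    · have hx0 : p x = 0 := le_antisymm (hP0 ▸ hple x) (hp x)
      rw [hx0]
      refine Finset.sum_eq_zero fun y _ => ?_
      dsimp only
      split_ifs with h
      · rw [hx0]; simp
      · rfl
    · have hterm : ∀ y, (if TA x = TB y then p x * q y / P (TA x) else 0)
          = p x / P (TA x) * (if TB y = TA x then q y else 0) := by
        intro y
        by_cases h1 : TA x = TB y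
        · rw [if_pos h1, if_pos h1.symm]
          ring
        · rw [if_neg h1, if_neg (fun h => h1 h.symm)]
          ring
      calc ∑ y, (if TA x = TB y then p x * q y / P (TA x) else 0)
          = ∑ y, p x / P (TA x) * (if TB y = TA x then q y else 0) :=
            Finset.sum_congr rfl fun y _ => hterm y
        _ = p x / P (TA x) * ∑ y, (if TB y = TA x then q y else 0) := by
            rw [Finset.mul_sum]
        _ = p x / P (TA x) * P (TA x) := by rw [← hmatch (TA x)]
        _ = p x := div_mul_cancel₀ (p x) hP0
  · have hterm : ∀ x, (if TA x = TB y then p x * q y / P (TA x) else 0)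
        = q y / P (TB y) * (if TA x = TB y then p x else 0) := by
      intro x
      split_ifs with h1
      · rw [h1]; ring
      · ring
    calc ∑ x, (if TA x = TB y then p x * q y / P (TA x) else 0)
        = ∑ x, q y / P (TB y) * (if TA x = TB y then p x else 0) :=
          Finset.sum_congr rfl fun x _ => hterm x
      _ = q y / P (TB y) * P (TB y) := by rw [← Finset.mul_sum]
      _ = q y := by
          by_cases hP0 : P (TB y) = 0
          · have : q y = 0 := le_antisymm (hP0 ▸ hqle y) (hq y)
            rw [this, hP0]
            simp
          · exact div_mul_cancel₀ (q y) hP0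
  · by_contra hne
    exact h (if_neg hne)

end Couplings

section CostLemmas
open scoped Classical

variable {X Y : Type*} [Fintype X] [Fintype Y] {d : ℕ}

lemma costIter_nonneg (mX : X → X → ℝ) (mY : Y → Y → ℝ) (D0 : X → Y → ℝ)
    (hD0 : ∀ x y, 0 ≤ D0 x y) : ∀ j x y, 0 ≤ costIter mX mY D0 j x y := by
  intro j
  induction j with
  | zero => exact hD0
  | succ j ih =>
    intro x y
    apply Real.sInf_nonneg
    rintro r ⟨γ, hγ, rfl⟩
    exact Finset.sum_nonneg fun x' _ => Finset.sum_nonneg fun y' _ =>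
      mul_nonneg (ih x' y') (hγ.1 x' y')

/-- The value type for the depth-`j` WL measure hierarchy. -/
def VT (d : ℕ) : ℕ → Type
  | 0 => EuclideanSpace ℝ (Fin d)
  | j + 1 => VT d j → ℝ

/-- The depth-`j` WL measure hierarchy map. -/
noncomputable def Tmap [Fintype X] (mX : X → X → ℝ) (ℓX : X → EuclideanSpace ℝ (Fin d)) :
    (j : ℕ) → X → VT d j
  | 0 => ℓX
  | j + 1 => fun x v => ∑ x', if Tmap mX ℓX j x' = v then mX x x' else 0

lemma Tmap_succ_apply (mX : X → X → ℝ) (ℓX : X → EuclideanSpace ℝ (Fin d)) (j : ℕ) (x : X)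
    (v : VT d j) :
    Tmap mX ℓX (j + 1) x v = ∑ x', if Tmap mX ℓX j x' = v then mX x x' else 0 := rfl

lemma costIter_eq_zero_of_Tmap_eq (mX : X → X → ℝ) (mY : Y → Y → ℝ)
    (ℓX : X → EuclideanSpace ℝ (Fin d)) (ℓY : Y → EuclideanSpace ℝ (Fin d))
    (hmX : ∀ x x', 0 ≤ mX x x') (hmY : ∀ y y', 0 ≤ mY y y') :
    ∀ j x y, Tmap mX ℓX j x = Tmap mY ℓY j y →
      costIter mX mY (fun x y => dist (ℓX x) (ℓY y)) j x y = 0 := by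
  intro j
  induction j with
  | zero =>
    intro x y h
    have h' : ℓX x = ℓY y := h
    show dist (ℓX x) (ℓY y) = 0
    rw [h', dist_self]
  | succ j ih =>
    intro x y h
    have hmatch : ∀ v, (∑ x', if Tmap mX ℓX j x' = v then mX x x' else 0)
        = ∑ y', if Tmap mY ℓY j y' = v then mY y y' else 0 := by
      intro v
      have := congrFun h v
      rw [Tmap_succ_apply, Tmap_succ_apply] at this
      exact this
    obtain ⟨γ, hγ, hsupp⟩ := exists_matching_coupling (Tmap mX ℓX j) (Tmap mY ℓY j)
      (mX x) (mY y) (hmX x) (hmY y) hmatch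
    show sInf _ = 0
    apply sInf_eq_zero_of
    · refine ⟨γ, hγ, ?_⟩
      symm
      refine Finset.sum_eq_zero fun x' _ => Finset.sum_eq_zero fun y' _ => ?_
      by_cases h0 : γ x' y' = 0
      · rw [h0, mul_zero]
      · rw [ih x' y' (hsupp x' y' h0), zero_mul]
    · rintro r ⟨γ', hγ', rfl⟩
      exact Finset.sum_nonneg fun x' _ => Finset.sum_nonneg fun y' _ =>
        mul_nonneg (costIter_nonneg mX mY _ (fun _ _ => dist_nonneg) j x' y') (hγ'.1 x' y')

lemma dWL_eq_zero_of_push_eq (mX : X → X → ℝ) (μX : X → ℝ) (ℓX : X → EuclideanSpace ℝ (Fin d))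
    (mY : Y → Y → ℝ) (μY : Y → ℝ) (ℓY : Y → EuclideanSpace ℝ (Fin d)) (k : ℕ)
    (hmX : ∀ x x', 0 ≤ mX x x') (hmY : ∀ y y', 0 ≤ mY y y')
    (hμX : ∀ x, 0 ≤ μX x) (hμY : ∀ y, 0 ≤ μY y)
    (hpush : ∀ v, (∑ x, if Tmap mX ℓX k x = v then μX x else 0)
      = ∑ y, if Tmap mY ℓY k y = v then μY y else 0) :
    dWL mX μX ℓX mY μY ℓY k = 0 := by
  obtain ⟨γ, hγ, hsupp⟩ := exists_matching_coupling (Tmap mX ℓX k) (Tmap mY ℓY k)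
    μX μY hμX hμY hpush
  apply sInf_eq_zero_of
  · refine ⟨γ, hγ, ?_⟩
    symm
    refine Finset.sum_eq_zero fun x _ => Finset.sum_eq_zero fun y _ => ?_
    by_cases h0 : γ x y = 0
    · rw [h0, mul_zero]
    · rw [costIter_eq_zero_of_Tmap_eq mX mY ℓX ℓY hmX hmY k x y (hsupp x y h0), zero_mul]
  · rintro r ⟨γ', hγ', rfl⟩
    exact Finset.sum_nonneg fun x _ => Finset.sum_nonneg fun y _ =>
      mul_nonneg (costIter_nonneg mX mY _ (fun _ _ => dist_nonneg) k x y) (hγ'.1 x y)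

end CostLemmas


/-- Coordinate projection on a Euclidean space. -/
noncomputable def coordP {n : ℕ} (c : Fin n) : EuclideanSpace ℝ (Fin n) → ℝ := fun u => u c

lemma coordP_lip {n : ℕ} (c : Fin n) : LipschitzWith 1 (coordP c) := by
  apply LipschitzWith.of_dist_le_mul
  intro u w
  rw [NNReal.coe_one, one_mul]
  exact euclid_coord_dist_le u w c

section BumpMCNN

open scoped Classical

variable {d : ℕ} {X Y : Type*} [Fintype X] [Fintype Y]
  (mX : X → X → ℝ) (ℓX : X → EuclideanSpace ℝ (Fin d))
  (mY : Y → Y → ℝ) (ℓY : Y → EuclideanSpace ℝ (Fin d))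

/-- All depth-`j` WL hierarchy values of both chains. -/
noncomputable def labSet (j : ℕ) : Finset (VT d j) :=
  Finset.univ.image (Tmap mX ℓX j) ∪ Finset.univ.image (Tmap mY ℓY j)

lemma Tmap_mem_labSet_left (j : ℕ) (x : X) : Tmap mX ℓX j x ∈ labSet mX ℓX mY ℓY j :=
  Finset.mem_union_left _ (Finset.mem_image_of_mem _ (Finset.mem_univ x))

lemma Tmap_mem_labSet_right (j : ℕ) (y : Y) : Tmap mY ℓY j y ∈ labSet mX ℓX mY ℓY j :=
  Finset.mem_union_right _ (Finset.mem_image_of_mem _ (Finset.mem_univ y))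

/-- Dimensions of the bump MCNN. -/
noncomputable def bdims : ℕ → ℕ := fun j => (labSet mX ℓX mY ℓY j).card

/-- Encoding of hierarchy values as Euclidean vectors. -/
noncomputable def encV :
    (j : ℕ) → VT d j → EuclideanSpace ℝ (Fin (mcnnDim d (bdims mX ℓX mY ℓY) j))
  | 0 => fun v => v
  | j + 1 => fun w => WithLp.toLp 2 (fun c => w ((labSet mX ℓX mY ℓY j).equivFin.symm c : VT d j))

lemma encV_succ_apply (j : ℕ) (w : VT d (j + 1)) (c : Fin (bdims mX ℓX mY ℓY j)) :
    encV mX ℓX mY ℓY (j + 1) w c = w ((labSet mX ℓX mY ℓY j).equivFin.symm c : VT d j) := rfl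

lemma labSet_succ_support (j : ℕ) (v : VT d (j + 1))
    (hv : v ∈ labSet mX ℓX mY ℓY (j + 1)) (u : VT d j)
    (hu : u ∉ labSet mX ℓX mY ℓY j) : v u = 0 := by
  rw [labSet, Finset.mem_union] at hv
  rcases hv with hv | hv
  · obtain ⟨z, _, rfl⟩ := Finset.mem_image.1 hv
    rw [Tmap_succ_apply]
    exact Finset.sum_eq_zero fun z' _ =>
      if_neg fun h : Tmap mX ℓX j z' = u => hu (h ▸ Tmap_mem_labSet_left mX ℓX mY ℓY j z')
  · obtain ⟨z, _, rfl⟩ := Finset.mem_image.1 hv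
    rw [Tmap_succ_apply]
    exact Finset.sum_eq_zero fun z' _ =>
      if_neg fun h : Tmap mY ℓY j z' = u => hu (h ▸ Tmap_mem_labSet_right mX ℓX mY ℓY j z')

lemma encV_inj (j : ℕ) :
    ∀ v ∈ labSet mX ℓX mY ℓY j, ∀ v' ∈ labSet mX ℓX mY ℓY j,
      encV mX ℓX mY ℓY j v = encV mX ℓX mY ℓY j v' → v = v' := by
  cases j with
  | zero => exact fun v _ v' _ h => h
  | succ j =>
    intro v hv v' hv' h
    funext u
    by_cases hu : u ∈ labSet mX ℓX mY ℓY j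
    · have hc := congrFun (congrArg WithLp.ofLp h) ((labSet mX ℓX mY ℓY j).equivFin ⟨u, hu⟩)
      erw [encV_succ_apply, encV_succ_apply, Equiv.symm_apply_apply] at hc
      exact hc
    · rw [labSet_succ_support mX ℓX mY ℓY j v hv u hu,
        labSet_succ_support mX ℓX mY ℓY j v' hv' u hu]

/-- A separation radius for the encoded depth-`j` values. -/
noncomputable def sepR (j : ℕ) : ℝ :=
  Classical.choose (exists_sep_radius (labSet mX ℓX mY ℓY j) (encV mX ℓX mY ℓY j)
    (encV_inj mX ℓX mY ℓY j))

lemma sepR_pos (j : ℕ) : 0 < sepR mX ℓX mY ℓY j :=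
  (Classical.choose_spec (exists_sep_radius (labSet mX ℓX mY ℓY j) (encV mX ℓX mY ℓY j)
    (encV_inj mX ℓX mY ℓY j))).1

lemma sepR_sep (j : ℕ) : ∀ v ∈ labSet mX ℓX mY ℓY j, ∀ v' ∈ labSet mX ℓX mY ℓY j,
    v ≠ v' → 2 * sepR mX ℓX mY ℓY j ≤
      dist (encV mX ℓX mY ℓY j v) (encV mX ℓX mY ℓY j v') :=
  (Classical.choose_spec (exists_sep_radius (labSet mX ℓX mY ℓY j) (encV mX ℓX mY ℓY j)
    (encV_inj mX ℓX mY ℓY j))).2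

/-- The bump layer maps. -/
noncomputable def bphi (j : ℕ) :
    EuclideanSpace ℝ (Fin (mcnnDim d (bdims mX ℓX mY ℓY) j)) →
      EuclideanSpace ℝ (Fin (mcnnDim d (bdims mX ℓX mY ℓY) (j + 1))) :=
  fun t => WithLp.toLp 2 (fun c => max 0 (1 - dist t
    (encV mX ℓX mY ℓY j ((labSet mX ℓX mY ℓY j).equivFin.symm c : VT d j)) / sepR mX ℓX mY ℓY j))

lemma bphi_lip (j : ℕ) : ∃ K : ℝ≥0, LipschitzWith K (bphi mX ℓX mY ℓY j) := by
  refine ⟨_, euclid_lipschitz_coords _ (Real.toNNReal (sepR mX ℓX mY ℓY j)⁻¹) ?_⟩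
  intro c t t'
  set a := encV mX ℓX mY ℓY j ((labSet mX ℓX mY ℓY j).equivFin.symm c : VT d j)
  have hr := sepR_pos mX ℓX mY ℓY j
  have hcoe : ((Real.toNNReal (sepR mX ℓX mY ℓY j)⁻¹ : ℝ≥0) : ℝ)
      = (sepR mX ℓX mY ℓY j)⁻¹ := Real.coe_toNNReal _ (by positivity)
  rw [hcoe, Real.dist_eq]
  have h1 : |max 0 (1 - dist t a / sepR mX ℓX mY ℓY j)
      - max 0 (1 - dist t' a / sepR mX ℓX mY ℓY j)|
      ≤ |(1 - dist t a / sepR mX ℓX mY ℓY j) - (1 - dist t' a / sepR mX ℓX mY ℓY j)| := by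
    rw [max_comm 0 _, max_comm 0 _]
    exact abs_max_sub_max_le_abs _ _ _
  refine le_trans h1 ?_
  have h2 : (1 - dist t a / sepR mX ℓX mY ℓY j) - (1 - dist t' a / sepR mX ℓX mY ℓY j)
      = (dist t' a - dist t a) / sepR mX ℓX mY ℓY j := by ring
  rw [h2, abs_div, abs_of_pos hr, div_le_iff₀ hr]
  calc |dist t' a - dist t a| ≤ dist t' t := abs_dist_sub_le _ _ _
    _ = dist t t' := dist_comm _ _
    _ ≤ (sepR mX ℓX mY ℓY j)⁻¹ * dist t t' * sepR mX ℓX mY ℓY j := by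
        rw [mul_comm _ (dist t t'), mul_assoc, inv_mul_cancel₀ (ne_of_gt hr), mul_one]

lemma bphi_enc (j : ℕ) (v : VT d j) (hv : v ∈ labSet mX ℓX mY ℓY j)
    (c : Fin (bdims mX ℓX mY ℓY j)) :
    bphi mX ℓX mY ℓY j (encV mX ℓX mY ℓY j v) c
      = if ((labSet mX ℓX mY ℓY j).equivFin.symm c : VT d j) = v then 1 else 0 := by
  set u := ((labSet mX ℓX mY ℓY j).equivFin.symm c : VT d j) with hu
  have humem : u ∈ labSet mX ℓX mY ℓY j := ((labSet mX ℓX mY ℓY j).equivFin.symm c).2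
  by_cases h : u = v
  · rw [if_pos h]
    show max 0 (1 - dist (encV mX ℓX mY ℓY j v) (encV mX ℓX mY ℓY j u)
      / sepR mX ℓX mY ℓY j) = 1
    rw [h, dist_self, zero_div, sub_zero]
    exact max_eq_right zero_le_one
  · rw [if_neg h]
    show max 0 (1 - dist (encV mX ℓX mY ℓY j v) (encV mX ℓX mY ℓY j u)
      / sepR mX ℓX mY ℓY j) = 0
    have hsep := sepR_sep mX ℓX mY ℓY j v hv u humem (fun hh => h hh.symm)
    have hr := sepR_pos mX ℓX mY ℓY j
    apply max_eq_left
    rw [sub_nonpos, le_div_iff₀ hr, one_mul]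
    calc sepR mX ℓX mY ℓY j ≤ 2 * sepR mX ℓX mY ℓY j := by linarith
    _ ≤ dist (encV mX ℓX mY ℓY j v) (encV mX ℓX mY ℓY j u) := hsep

/-- The bump MCNN. -/
noncomputable def bumpN (k : ℕ)
    (ψ : EuclideanSpace ℝ (Fin (mcnnDim d (bdims mX ℓX mY ℓY) (k + 1))) → ℝ)
    (hψ : Continuous ψ) : MCNN d k where
  dims := bdims mX ℓX mY ℓY
  φ := bphi mX ℓX mY ℓY
  φ_lip := bphi_lip mX ℓX mY ℓY
  ψ := ψ
  ψ_cont := hψ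

lemma bump_label {Z : Type*} [Fintype Z] (mZ : Z → Z → ℝ)
    (ℓZ : Z → EuclideanSpace ℝ (Fin d))
    (hmem : ∀ j z, Tmap mZ ℓZ j z ∈ labSet mX ℓX mY ℓY j) (k : ℕ)
    (ψ : EuclideanSpace ℝ (Fin (mcnnDim d (bdims mX ℓX mY ℓY) (k + 1))) → ℝ)
    (hψ : Continuous ψ) :
    ∀ j z, mcnnLabel (bumpN mX ℓX mY ℓY k ψ hψ) mZ ℓZ j z
      = encV mX ℓX mY ℓY j (Tmap mZ ℓZ j z) := by
  intro j
  induction j with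
  | zero => intro z; rfl
  | succ j ih =>
    intro z
    show (∑ z', mZ z z' • (bumpN mX ℓX mY ℓY k ψ hψ).φ j
        (mcnnLabel (bumpN mX ℓX mY ℓY k ψ hψ) mZ ℓZ j z')) = _
    ext c
    rw [WithLp.ofLp_sum]
    erw [Finset.sum_apply]
    erw [encV_succ_apply, Tmap_succ_apply]
    refine Finset.sum_congr rfl fun z' _ => ?_
    have : (bumpN mX ℓX mY ℓY k ψ hψ).φ j (mcnnLabel (bumpN mX ℓX mY ℓY k ψ hψ) mZ ℓZ j z')
        = bphi mX ℓX mY ℓY j (encV mX ℓX mY ℓY j (Tmap mZ ℓZ j z')) := by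
      rw [ih z']; rfl
    show mZ z z' * ((bumpN mX ℓX mY ℓY k ψ hψ).φ j
      (mcnnLabel (bumpN mX ℓX mY ℓY k ψ hψ) mZ ℓZ j z') c) = _
    rw [this, bphi_enc mX ℓX mY ℓY j (Tmap mZ ℓZ j z') (hmem j z') c]
    by_cases h : Tmap mZ ℓZ j z' = ((labSet mX ℓX mY ℓY j).equivFin.symm c : VT d j)
    · rw [if_pos h, if_pos h.symm, mul_one]
    · rw [if_neg h, if_neg (fun hh => h hh.symm), mul_zero]

lemma bump_eval {Z : Type*} [Fintype Z] (mZ : Z → Z → ℝ) (μZ : Z → ℝ)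
    (ℓZ : Z → EuclideanSpace ℝ (Fin d))
    (hmem : ∀ j z, Tmap mZ ℓZ j z ∈ labSet mX ℓX mY ℓY j) (k : ℕ)
    (v : VT d k) (hv : v ∈ labSet mX ℓX mY ℓY k) :
    mcnnEval (bumpN mX ℓX mY ℓY k (coordP ((labSet mX ℓX mY ℓY k).equivFin ⟨v, hv⟩))
        (coordP_lip _).continuous) mZ μZ ℓZ
      = ∑ z, if Tmap mZ ℓZ k z = v then μZ z else 0 := by
  set c : Fin (bdims mX ℓX mY ℓY k) := (labSet mX ℓX mY ℓY k).equivFin ⟨v, hv⟩ with hc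
  have hlab := bump_label mX ℓX mY ℓY mZ ℓZ hmem k (coordP c) (coordP_lip c).continuous
  show coordP c (∑ z, μZ z • (bumpN mX ℓX mY ℓY k (coordP c) (coordP_lip c).continuous).φ k
    (mcnnLabel (bumpN mX ℓX mY ℓY k (coordP c) (coordP_lip c).continuous) mZ ℓZ k z)) = _
  have hφ : ∀ z : Z, (bumpN mX ℓX mY ℓY k (coordP c) (coordP_lip c).continuous).φ k
      (mcnnLabel (bumpN mX ℓX mY ℓY k (coordP c) (coordP_lip c).continuous) mZ ℓZ k z)
      = bphi mX ℓX mY ℓY k (encV mX ℓX mY ℓY k (Tmap mZ ℓZ k z)) := by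
    intro z
    rw [hlab k z]
    rfl
  simp only [hφ]
  show (∑ z, μZ z • bphi mX ℓX mY ℓY k (encV mX ℓX mY ℓY k (Tmap mZ ℓZ k z))) c = _
  rw [WithLp.ofLp_sum]
  erw [Finset.sum_apply]
  refine Finset.sum_congr rfl fun z _ => ?_
  show μZ z * (bphi mX ℓX mY ℓY k (encV mX ℓX mY ℓY k (Tmap mZ ℓZ k z)) c) = _
  rw [bphi_enc mX ℓX mY ℓY k (Tmap mZ ℓZ k z) (hmem k z) c]
  have hcv : ((labSet mX ℓX mY ℓY k).equivFin.symm c : VT d k) = v := by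
    rw [hc, Equiv.symm_apply_apply]
  rw [hcv]
  by_cases h : Tmap mZ ℓZ k z = v
  · rw [if_pos h.symm, if_pos h, mul_one]
  · rw [if_neg (fun hh => h hh.symm), if_neg h, mul_zero]

lemma exists_separating_mcnn (k : ℕ) (μX : X → ℝ) (μY : Y → ℝ)
    (hmX : ∀ x x', 0 ≤ mX x x') (hmY : ∀ y y', 0 ≤ mY y y')
    (hμX : ∀ x, 0 ≤ μX x) (hμY : ∀ y, 0 ≤ μY y)
    (hne : dWL mX μX ℓX mY μY ℓY k ≠ 0) :
    ∃ (N : MCNN d k) (Kψ : ℝ≥0), LipschitzWith Kψ N.ψ ∧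
      mcnnEval N mX μX ℓX ≠ mcnnEval N mY μY ℓY := by
  have hpush : ¬ ∀ v, (∑ x, if Tmap mX ℓX k x = v then μX x else 0)
      = ∑ y, if Tmap mY ℓY k y = v then μY y else 0 :=
    fun h => hne (dWL_eq_zero_of_push_eq mX μX ℓX mY μY ℓY k hmX hmY hμX hμY h)
  push_neg at hpush
  obtain ⟨v, hv⟩ := hpush
  have hvmem : v ∈ labSet mX ℓX mY ℓY k := by
    by_contra hmem
    apply hv
    rw [Finset.sum_eq_zero fun x _ =>
        if_neg fun h : Tmap mX ℓX k x = v => hmem (h ▸ Tmap_mem_labSet_left mX ℓX mY ℓY k x),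
      Finset.sum_eq_zero fun y _ =>
        if_neg fun h : Tmap mY ℓY k y = v => hmem (h ▸ Tmap_mem_labSet_right mX ℓX mY ℓY k y)]
  refine ⟨bumpN mX ℓX mY ℓY k (coordP ((labSet mX ℓX mY ℓY k).equivFin ⟨v, hvmem⟩))
    (coordP_lip _).continuous, 1, coordP_lip _, ?_⟩
  rw [bump_eval mX ℓX mY ℓY mX μX ℓX (Tmap_mem_labSet_left mX ℓX mY ℓY) k v hvmem,
    bump_eval mX ℓX mY ℓY mY μY ℓY (Tmap_mem_labSet_right mX ℓX mY ℓY) k v hvmem]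
  exact hv

end BumpMCNN


section EvalLipschitz

variable {d k : ℕ} {X Y : Type*} [Fintype X] [Fintype Y]

lemma smul_sum_dist_le {E : Type*} [NormedAddCommGroup E] [NormedSpace ℝ E]
    (u : X → E) (w : Y → E) (p : X → ℝ) (q : Y → ℝ) (γ : X → Y → ℝ)
    (hγ : IsCoupling p q γ) (D : X → Y → ℝ) (hD : ∀ x y, dist (u x) (w y) ≤ D x y) :
    dist (∑ x, p x • u x) (∑ y, q y • w y) ≤ ∑ x, ∑ y, D x y * γ x y := by
  have h1 : ∑ x, p x • u x = ∑ x, ∑ y, γ x y • u x :=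
    Finset.sum_congr rfl fun x _ => by rw [← hγ.2.1 x, Finset.sum_smul]
  have h2 : ∑ y, q y • w y = ∑ x, ∑ y, γ x y • w y := by
    rw [Finset.sum_comm]
    exact Finset.sum_congr rfl fun y _ => by rw [← hγ.2.2 y, Finset.sum_smul]
  rw [dist_eq_norm, h1, h2]
  have h3 : (∑ x, ∑ y, γ x y • u x) - ∑ x, ∑ y, γ x y • w y
      = ∑ x, ∑ y, γ x y • (u x - w y) := by
    rw [← Finset.sum_sub_distrib]
    exact Finset.sum_congr rfl fun x _ => by
      rw [← Finset.sum_sub_distrib]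
      exact Finset.sum_congr rfl fun y _ => (smul_sub _ _ _).symm
  rw [h3]
  calc ‖∑ x, ∑ y, γ x y • (u x - w y)‖ ≤ ∑ x, ‖∑ y, γ x y • (u x - w y)‖ :=
        norm_sum_le _ _
    _ ≤ ∑ x, ∑ y, ‖γ x y • (u x - w y)‖ :=
        Finset.sum_le_sum fun x _ => norm_sum_le _ _
    _ ≤ ∑ x, ∑ y, D x y * γ x y := by
        refine Finset.sum_le_sum fun x _ => Finset.sum_le_sum fun y _ => ?_
        rw [norm_smul, Real.norm_eq_abs, abs_of_nonneg (hγ.1 x y), mul_comm]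
        refine mul_le_mul_of_nonneg_right ?_ (hγ.1 x y)
        rw [← dist_eq_norm]
        exact hD x y

/-- Chosen Lipschitz constant for layer `j` of an MCNN. -/
noncomputable def phiK (N : MCNN d k) (j : ℕ) : ℝ≥0 := Classical.choose (N.φ_lip j)

lemma phiK_spec (N : MCNN d k) (j : ℕ) : LipschitzWith (phiK N j) (N.φ j) :=
  Classical.choose_spec (N.φ_lip j)

/-- Cumulative Lipschitz constant for the labels at layer `j`. -/
noncomputable def labK (N : MCNN d k) : ℕ → ℝ≥0
  | 0 => 1
  | j + 1 => phiK N j * labK N j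

lemma label_dist_le (N : MCNN d k) (mX : X → X → ℝ) (ℓX : X → EuclideanSpace ℝ (Fin d))
    (mY : Y → Y → ℝ) (ℓY : Y → EuclideanSpace ℝ (Fin d))
    (hmX : ∀ x, IsPMF (mX x)) (hmY : ∀ y, IsPMF (mY y)) :
    ∀ j x y, dist (mcnnLabel N mX ℓX j x) (mcnnLabel N mY ℓY j y)
      ≤ (labK N j : ℝ) * costIter mX mY (fun x y => dist (ℓX x) (ℓY y)) j x y := by
  intro j
  induction j with
  | zero =>
    intro x y
    show dist (ℓX x) (ℓY y) ≤ ((1 : ℝ≥0) : ℝ) * dist (ℓX x) (ℓY y)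
    rw [NNReal.coe_one, one_mul]
  | succ j ih =>
    intro x y
    show dist (∑ x', mX x x' • N.φ j (mcnnLabel N mX ℓX j x'))
        (∑ y', mY y y' • N.φ j (mcnnLabel N mY ℓY j y')) ≤ _
    have hne : {r : ℝ | ∃ γ : X → Y → ℝ, IsCoupling (mX x) (mY y) γ ∧
        r = ∑ x', ∑ y', costIter mX mY (fun x y => dist (ℓX x) (ℓY y)) j x' y' * γ x' y'}.Nonempty :=
      ⟨_, fun x' y' => mX x x' * mY y y', isCoupling_prod (hmX x) (hmY y), rfl⟩
    refine le_mul_csInf hne (by positivity) ?_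
    rintro r ⟨γ, hγ, rfl⟩
    calc dist (∑ x', mX x x' • N.φ j (mcnnLabel N mX ℓX j x'))
          (∑ y', mY y y' • N.φ j (mcnnLabel N mY ℓY j y'))
        ≤ ∑ x', ∑ y', ((phiK N j : ℝ) * ((labK N j : ℝ)
            * costIter mX mY (fun x y => dist (ℓX x) (ℓY y)) j x' y')) * γ x' y' := by
          refine smul_sum_dist_le _ _ _ _ γ hγ _ fun x' y' => ?_
          calc dist (N.φ j (mcnnLabel N mX ℓX j x')) (N.φ j (mcnnLabel N mY ℓY j y'))
              ≤ (phiK N j : ℝ) * dist (mcnnLabel N mX ℓX j x') (mcnnLabel N mY ℓY j y') :=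
                (phiK_spec N j).dist_le_mul _ _
            _ ≤ (phiK N j : ℝ) * ((labK N j : ℝ)
                * costIter mX mY (fun x y => dist (ℓX x) (ℓY y)) j x' y') :=
                mul_le_mul_of_nonneg_left (ih x' y') (phiK N j).coe_nonneg
      _ = (labK N (j + 1) : ℝ) * ∑ x', ∑ y',
            costIter mX mY (fun x y => dist (ℓX x) (ℓY y)) j x' y' * γ x' y' := by
          show _ = ((phiK N j * labK N j : ℝ≥0) : ℝ) * _
          push_cast
          rw [Finset.mul_sum]
          refine Finset.sum_congr rfl fun x' _ => ?_
          rw [Finset.mul_sum]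
          exact Finset.sum_congr rfl fun y' _ => by ring

lemma mcnn_eval_dist_le (N : MCNN d k) {Kψ : ℝ≥0} (hψ : LipschitzWith Kψ N.ψ)
    (mX : X → X → ℝ) (μX : X → ℝ) (ℓX : X → EuclideanSpace ℝ (Fin d))
    (mY : Y → Y → ℝ) (μY : Y → ℝ) (ℓY : Y → EuclideanSpace ℝ (Fin d))
    (hX : IsMMC mX μX) (hY : IsMMC mY μY) :
    |mcnnEval N mX μX ℓX - mcnnEval N mY μY ℓY|
      ≤ ((Kψ * phiK N k * labK N k : ℝ≥0) : ℝ) * dWL mX μX ℓX mY μY ℓY k := by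
  have hpre : dist (∑ x, μX x • N.φ k (mcnnLabel N mX ℓX k x))
      (∑ y, μY y • N.φ k (mcnnLabel N mY ℓY k y))
      ≤ ((phiK N k * labK N k : ℝ≥0) : ℝ) * dWL mX μX ℓX mY μY ℓY k := by
    have hne : {r : ℝ | ∃ γ : X → Y → ℝ, IsCoupling μX μY γ ∧
        r = ∑ x, ∑ y, costIter mX mY (fun x y => dist (ℓX x) (ℓY y)) k x y * γ x y}.Nonempty :=
      ⟨_, fun x y => μX x * μY y, isCoupling_prod hX.2.1 hY.2.1, rfl⟩
    refine le_mul_csInf hne (by positivity) ?_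
    rintro r ⟨γ, hγ, rfl⟩
    calc dist (∑ x, μX x • N.φ k (mcnnLabel N mX ℓX k x))
          (∑ y, μY y • N.φ k (mcnnLabel N mY ℓY k y))
        ≤ ∑ x, ∑ y, ((phiK N k : ℝ) * ((labK N k : ℝ)
            * costIter mX mY (fun x y => dist (ℓX x) (ℓY y)) k x y)) * γ x y := by
          refine smul_sum_dist_le _ _ _ _ γ hγ _ fun x y => ?_
          calc dist (N.φ k (mcnnLabel N mX ℓX k x)) (N.φ k (mcnnLabel N mY ℓY k y))
              ≤ (phiK N k : ℝ) * dist (mcnnLabel N mX ℓX k x) (mcnnLabel N mY ℓY k y) :=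
                (phiK_spec N k).dist_le_mul _ _
            _ ≤ (phiK N k : ℝ) * ((labK N k : ℝ)
                * costIter mX mY (fun x y => dist (ℓX x) (ℓY y)) k x y) :=
                mul_le_mul_of_nonneg_left
                  (label_dist_le N mX ℓX mY ℓY hX.1 hY.1 k x y) (phiK N k).coe_nonneg
      _ = ((phiK N k * labK N k : ℝ≥0) : ℝ) * ∑ x, ∑ y,
            costIter mX mY (fun x y => dist (ℓX x) (ℓY y)) k x y * γ x y := by
          push_cast
          rw [Finset.mul_sum]
          refine Finset.sum_congr rfl fun x _ => ?_
          rw [Finset.mul_sum]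
          exact Finset.sum_congr rfl fun y _ => by ring
  have h1 : |mcnnEval N mX μX ℓX - mcnnEval N mY μY ℓY|
      = dist (mcnnEval N mX μX ℓX) (mcnnEval N mY μY ℓY) := (Real.dist_eq _ _).symm
  rw [h1]
  calc dist (mcnnEval N mX μX ℓX) (mcnnEval N mY μY ℓY)
      ≤ (Kψ : ℝ) * dist (∑ x, μX x • N.φ k (mcnnLabel N mX ℓX k x))
        (∑ y, μY y • N.φ k (mcnnLabel N mY ℓY k y)) := hψ.dist_le_mul _ _
    _ ≤ (Kψ : ℝ) * (((phiK N k * labK N k : ℝ≥0) : ℝ) * dWL mX μX ℓX mY μY ℓY k) :=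
        mul_le_mul_of_nonneg_left hpre Kψ.coe_nonneg
    _ = ((Kψ * phiK N k * labK N k : ℝ≥0) : ℝ) * dWL mX μX ℓX mY μY ℓY k := by
        push_cast
        ring

end EvalLipschitz

section Combine

variable {d k : ℕ} {S : Type*} [Fintype S]

/-- Combined dimensions of a finite family of MCNNs. -/
def cdims (Ns : S → MCNN d k) : ℕ → ℕ := fun j => ∑ s, mcnnDim d (Ns s).dims (j + 1)

noncomputable def cEquiv (Ns : S → MCNN d k) (j : ℕ) :
    (Σ s : S, Fin (mcnnDim d (Ns s).dims (j + 1))) ≃ Fin (cdims Ns j) :=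
  Fintype.equivFinOfCardEq (by simp [cdims, Fintype.card_sigma])

/-- Projection onto block `s`. -/
noncomputable def cproj (Ns : S → MCNN d k) (j : ℕ) (s : S) :
    EuclideanSpace ℝ (Fin (cdims Ns j)) →
      EuclideanSpace ℝ (Fin (mcnnDim d (Ns s).dims (j + 1))) :=
  restrictE (fun a => cEquiv Ns j ⟨s, a⟩)

lemma cproj_lip (Ns : S → MCNN d k) (j : ℕ) (s : S) : LipschitzWith 1 (cproj Ns j s) :=
  euclid_restrict_lipschitz _ ((cEquiv Ns j).injective.comp sigma_mk_injective)

/-- Combined layer maps. -/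
noncomputable def cphi (Ns : S → MCNN d k) :
    (j : ℕ) → EuclideanSpace ℝ (Fin (mcnnDim d (cdims Ns) j)) →
      EuclideanSpace ℝ (Fin (mcnnDim d (cdims Ns) (j + 1)))
  | 0 => fun t => WithLp.toLp 2 (fun c => (Ns ((cEquiv Ns 0).symm c).1).φ 0 t (((cEquiv Ns 0).symm c).2))
  | j + 1 => fun v => WithLp.toLp 2 (fun c => (Ns ((cEquiv Ns (j + 1)).symm c).1).φ (j + 1)
      (cproj Ns j ((cEquiv Ns (j + 1)).symm c).1 v) (((cEquiv Ns (j + 1)).symm c).2))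

lemma cphi_lip (Ns : S → MCNN d k) (j : ℕ) : ∃ K : ℝ≥0, LipschitzWith K (cphi Ns j) := by
  refine ⟨_, euclid_lipschitz_coords _ (Finset.univ.sup fun s => phiK (Ns s) j) ?_⟩
  intro c v w
  have hsup : ∀ s : S, ((phiK (Ns s) j : ℝ≥0) : ℝ)
      ≤ ((Finset.univ.sup fun s => phiK (Ns s) j : ℝ≥0) : ℝ) := fun s =>
    NNReal.coe_le_coe.2 (Finset.le_sup (f := fun s => phiK (Ns s) j) (Finset.mem_univ s))
  cases j with
  | zero =>
    set s := ((cEquiv Ns 0).symm c).1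
    set a := ((cEquiv Ns 0).symm c).2
    show dist ((Ns s).φ 0 v a) ((Ns s).φ 0 w a) ≤ _
    calc dist ((Ns s).φ 0 v a) ((Ns s).φ 0 w a)
        ≤ dist ((Ns s).φ 0 v) ((Ns s).φ 0 w) := euclid_coord_dist_le _ _ a
      _ ≤ (phiK (Ns s) 0 : ℝ) * dist v w := (phiK_spec (Ns s) 0).dist_le_mul _ _
      _ ≤ _ := mul_le_mul_of_nonneg_right (hsup s) dist_nonneg
  | succ j =>
    set s := ((cEquiv Ns (j + 1)).symm c).1
    set a := ((cEquiv Ns (j + 1)).symm c).2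
    show dist ((Ns s).φ (j + 1) (cproj Ns j s v) a) ((Ns s).φ (j + 1) (cproj Ns j s w) a) ≤ _
    calc dist ((Ns s).φ (j + 1) (cproj Ns j s v) a) ((Ns s).φ (j + 1) (cproj Ns j s w) a)
        ≤ dist ((Ns s).φ (j + 1) (cproj Ns j s v)) ((Ns s).φ (j + 1) (cproj Ns j s w)) :=
          euclid_coord_dist_le _ _ a
      _ ≤ (phiK (Ns s) (j + 1) : ℝ) * dist (cproj Ns j s v) (cproj Ns j s w) :=
          (phiK_spec (Ns s) (j + 1)).dist_le_mul _ _
      _ ≤ (phiK (Ns s) (j + 1) : ℝ) * dist v w := by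
          refine mul_le_mul_of_nonneg_left ?_ (phiK (Ns s) (j + 1)).coe_nonneg
          have := (cproj_lip Ns j s).dist_le_mul v w
          rw [NNReal.coe_one, one_mul] at this
          exact this
      _ ≤ _ := mul_le_mul_of_nonneg_right (hsup s) dist_nonneg

/-- The combined MCNN. -/
noncomputable def cN (Ns : S → MCNN d k) (Ψ : (S → ℝ) → ℝ) (hΨ : Continuous Ψ) : MCNN d k where
  dims := cdims Ns
  φ := cphi Ns
  φ_lip := cphi_lip Ns
  ψ := fun v => Ψ (fun s => (Ns s).ψ (cproj Ns k s v))
  ψ_cont := hΨ.comp (continuous_pi fun s => ((Ns s).ψ_cont).comp (cproj_lip Ns k s).continuous)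

lemma cN_label (Ns : S → MCNN d k) (Ψ : (S → ℝ) → ℝ) (hΨ : Continuous Ψ)
    {Z : Type*} [Fintype Z] (m : Z → Z → ℝ) (ℓ : Z → EuclideanSpace ℝ (Fin d)) :
    ∀ j z s, cproj Ns j s (mcnnLabel (cN Ns Ψ hΨ) m ℓ (j + 1) z)
      = mcnnLabel (Ns s) m ℓ (j + 1) z := by
  intro j
  induction j with
  | zero =>
    intro z s
    ext a
    show (∑ z', m z z' • cphi Ns 0 (ℓ z')) (cEquiv Ns 0 ⟨s, a⟩)
      = (∑ z', m z z' • (Ns s).φ 0 (ℓ z')) a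
    rw [WithLp.ofLp_sum, WithLp.ofLp_sum]; erw [Finset.sum_apply, Finset.sum_apply]
    refine Finset.sum_congr rfl fun z' _ => ?_
    show m z z' * cphi Ns 0 (ℓ z') (cEquiv Ns 0 ⟨s, a⟩) = m z z' * ((Ns s).φ 0 (ℓ z') a)
    congr 1
    show (Ns ((cEquiv Ns 0).symm (cEquiv Ns 0 ⟨s, a⟩)).1).φ 0 (ℓ z')
      (((cEquiv Ns 0).symm (cEquiv Ns 0 ⟨s, a⟩)).2) = _
    rw [Equiv.symm_apply_apply]
  | succ j ih =>
    intro z s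
    ext a
    show (∑ z', m z z' • cphi Ns (j + 1) (mcnnLabel (cN Ns Ψ hΨ) m ℓ (j + 1) z'))
        (cEquiv Ns (j + 1) ⟨s, a⟩)
      = (∑ z', m z z' • (Ns s).φ (j + 1) (mcnnLabel (Ns s) m ℓ (j + 1) z')) a
    rw [WithLp.ofLp_sum, WithLp.ofLp_sum]; erw [Finset.sum_apply, Finset.sum_apply]
    refine Finset.sum_congr rfl fun z' _ => ?_
    show m z z' * cphi Ns (j + 1) (mcnnLabel (cN Ns Ψ hΨ) m ℓ (j + 1) z')
        (cEquiv Ns (j + 1) ⟨s, a⟩)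
      = m z z' * ((Ns s).φ (j + 1) (mcnnLabel (Ns s) m ℓ (j + 1) z') a)
    congr 1
    show (Ns ((cEquiv Ns (j + 1)).symm (cEquiv Ns (j + 1) ⟨s, a⟩)).1).φ (j + 1)
        (cproj Ns j ((cEquiv Ns (j + 1)).symm (cEquiv Ns (j + 1) ⟨s, a⟩)).1
          (mcnnLabel (cN Ns Ψ hΨ) m ℓ (j + 1) z'))
        (((cEquiv Ns (j + 1)).symm (cEquiv Ns (j + 1) ⟨s, a⟩)).2) = _
    rw [Equiv.symm_apply_apply]
    rw [ih z' s]

lemma cN_eval (Ns : S → MCNN d k) (Ψ : (S → ℝ) → ℝ) (hΨ : Continuous Ψ)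
    {Z : Type*} [Fintype Z] (m : Z → Z → ℝ) (μ : Z → ℝ) (ℓ : Z → EuclideanSpace ℝ (Fin d)) :
    mcnnEval (cN Ns Ψ hΨ) m μ ℓ = Ψ (fun s => mcnnEval (Ns s) m μ ℓ) := by
  show Ψ (fun s => (Ns s).ψ (cproj Ns k s
    (∑ z, μ z • cphi Ns k (mcnnLabel (cN Ns Ψ hΨ) m ℓ k z)))) = _
  congr 1
  funext s
  show (Ns s).ψ _ = (Ns s).ψ (∑ z, μ z • (Ns s).φ k (mcnnLabel (Ns s) m ℓ k z))
  congr 1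
  ext a
  show (∑ z, μ z • cphi Ns k (mcnnLabel (cN Ns Ψ hΨ) m ℓ k z)) (cEquiv Ns k ⟨s, a⟩)
    = (∑ z, μ z • (Ns s).φ k (mcnnLabel (Ns s) m ℓ k z)) a
  rw [WithLp.ofLp_sum, WithLp.ofLp_sum]; erw [Finset.sum_apply, Finset.sum_apply]
  refine Finset.sum_congr rfl fun z _ => ?_
  show μ z * cphi Ns k (mcnnLabel (cN Ns Ψ hΨ) m ℓ k z) (cEquiv Ns k ⟨s, a⟩)
    = μ z * ((Ns s).φ k (mcnnLabel (Ns s) m ℓ k z) a)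
  congr 1
  cases k with
  | zero =>
    show (Ns ((cEquiv Ns 0).symm (cEquiv Ns 0 ⟨s, a⟩)).1).φ 0 (ℓ z)
      (((cEquiv Ns 0).symm (cEquiv Ns 0 ⟨s, a⟩)).2) = _
    rw [Equiv.symm_apply_apply]
    rfl
  | succ j =>
    show (Ns ((cEquiv Ns (j + 1)).symm (cEquiv Ns (j + 1) ⟨s, a⟩)).1).φ (j + 1)
        (cproj Ns j ((cEquiv Ns (j + 1)).symm (cEquiv Ns (j + 1) ⟨s, a⟩)).1
          (mcnnLabel (cN Ns Ψ hΨ) m ℓ (j + 1) z))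
        (((cEquiv Ns (j + 1)).symm (cEquiv Ns (j + 1) ⟨s, a⟩)).2) = _
    rw [Equiv.symm_apply_apply]
    rw [cN_label Ns Ψ hΨ m ℓ j z s]

end Combine

/-- An MCNN with constant output. -/
noncomputable def constN (d k : ℕ) (r : ℝ) : MCNN d k where
  dims := fun _ => d
  φ := fun i _ => (0 : EuclideanSpace ℝ (Fin (mcnnDim d (fun _ => d) (i + 1))))
  φ_lip := fun i => ⟨0, LipschitzWith.const _⟩
  ψ := fun _ => r
  ψ_cont := continuous_const

theorem mcnn_universal {d k : ℕ} {ι : Type*} [PseudoMetricSpace ι] [CompactSpace ι]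
    (Xc : ι → Type*) [∀ i, Fintype (Xc i)]
    (m : (i : ι) → Xc i → Xc i → ℝ) (μ : (i : ι) → Xc i → ℝ)
    (ℓ : (i : ι) → Xc i → EuclideanSpace ℝ (Fin d))
    (hMMC : ∀ i, IsMMC (m i) (μ i))
    (hdist : ∀ i j, dist i j = dWL (m i) (μ i) (ℓ i) (m j) (μ j) (ℓ j) k)
    (f : ι → ℝ) (hf : Continuous f) (ε : ℝ) (hε : 0 < ε) :
    ∃ N : MCNN d k, ∀ i, |mcnnEval N (m i) (μ i) (ℓ i) - f i| < ε := by
  classical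
  rcases isEmpty_or_nonempty ι with hemp | hnemp
  · exact ⟨constN d k 0, fun i => (IsEmpty.false i).elim⟩
  -- a bound on |f|
  obtain ⟨B, hB⟩ : ∃ B : ℝ, ∀ i, |f i| ≤ B := by
    obtain ⟨B, hB⟩ := (isCompact_range hf.abs).bddAbove
    exact ⟨B, fun i => hB ⟨i, rfl⟩⟩
  have hB0 : 0 ≤ B := le_trans (abs_nonneg _) (hB (Classical.arbitrary ι))
  -- modulus of continuity
  obtain ⟨δ, hδpos, hδ⟩ := Metric.uniformContinuous_iff.1
    (CompactSpace.uniformContinuous_of_continuous hf) (ε / 2) (by linarith)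
  set EV : MCNN d k → ι → ℝ := fun N i => mcnnEval N (m i) (μ i) (ℓ i) with hEV
  -- separating features for far-apart pairs
  have hfeat : ∀ p : ι × ι, δ ≤ dist p.1 p.2 → ∃ (N : MCNN d k) (C : ℝ), 0 ≤ C ∧
      (∀ i' j', |EV N i' - EV N j'| ≤ C * dist i' j') ∧ EV N p.1 ≠ EV N p.2 := by
    intro p hp
    have hd0 : dWL (m p.1) (μ p.1) (ℓ p.1) (m p.2) (μ p.2) (ℓ p.2) k ≠ 0 := by
      rw [← hdist]
      intro h
      rw [h] at hp
      linarith
    obtain ⟨N, Kψ, hψ, hNe⟩ := exists_separating_mcnn (m p.1) (ℓ p.1) (m p.2) (ℓ p.2) k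
      (μ p.1) (μ p.2) (fun x x' => ((hMMC p.1).1 x).1 x') (fun y y' => ((hMMC p.2).1 y).1 y')
      (hMMC p.1).2.1.1 (hMMC p.2).2.1.1 hd0
    refine ⟨N, ((Kψ * phiK N k * labK N k : ℝ≥0) : ℝ), NNReal.coe_nonneg _,
      fun i' j' => ?_, hNe⟩
    rw [hdist i' j']
    exact mcnn_eval_dist_le N hψ _ _ _ _ _ _ (hMMC i') (hMMC j')
  set Kδ : Set (ι × ι) := {p | δ ≤ dist p.1 p.2} with hKδ
  have hKc : IsCompact Kδ := (isClosed_le continuous_const continuous_dist).isCompact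
  choose N C hC0 hlip hNe using fun q : {p : ι × ι // δ ≤ dist p.1 p.2} => hfeat q.1 q.2
  set a : {p : ι × ι // δ ≤ dist p.1 p.2} → ℝ :=
    fun q => |EV (N q) q.1.1 - EV (N q) q.1.2| / 3 with ha
  have ha0 : ∀ q, 0 < a q := by
    intro q
    have h1 := abs_pos.2 (sub_ne_zero.2 (hNe q))
    simp only [ha]
    linarith
  set U : {p : ι × ι // δ ≤ dist p.1 p.2} → Set (ι × ι) := fun q =>
    Metric.ball q.1.1 (a q / (C q + 1)) ×ˢ Metric.ball q.1.2 (a q / (C q + 1)) with hU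
  have hrpos : ∀ q, 0 < a q / (C q + 1) := fun q => div_pos (ha0 q) (by linarith [hC0 q])
  obtain ⟨t, ht⟩ := hKc.elim_finite_subcover U
    (fun q => IsOpen.prod Metric.isOpen_ball Metric.isOpen_ball)
    (fun p hp => Set.mem_iUnion.2 ⟨⟨p, hp⟩,
      Set.mem_prod.2 ⟨Metric.mem_ball_self (hrpos _), Metric.mem_ball_self (hrpos _)⟩⟩)
  have hsep : ∀ p : ι × ι, δ ≤ dist p.1 p.2 →
      ∃ q ∈ t, a q ≤ |EV (N q) p.1 - EV (N q) p.2| := by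
    intro p hp
    obtain ⟨q, hqt, hpq⟩ := Set.mem_iUnion₂.1 (ht hp)
    refine ⟨q, hqt, ?_⟩
    obtain ⟨h1, h2⟩ := Set.mem_prod.1 hpq
    have hd1 : dist p.1 q.1.1 < a q / (C q + 1) := Metric.mem_ball.1 h1
    have hd2 : dist p.2 q.1.2 < a q / (C q + 1) := Metric.mem_ball.1 h2
    have hCa : C q * (a q / (C q + 1)) ≤ a q := by
      rw [mul_div_assoc']
      rw [div_le_iff₀ (by linarith [hC0 q])]
      nlinarith [ha0 q, hC0 q]
    have e1 : |EV (N q) p.1 - EV (N q) q.1.1| ≤ a q := by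
      calc |EV (N q) p.1 - EV (N q) q.1.1| ≤ C q * dist p.1 q.1.1 := hlip q _ _
        _ ≤ C q * (a q / (C q + 1)) :=
            mul_le_mul_of_nonneg_left (le_of_lt hd1) (hC0 q)
        _ ≤ a q := hCa
    have e2 : |EV (N q) p.2 - EV (N q) q.1.2| ≤ a q := by
      calc |EV (N q) p.2 - EV (N q) q.1.2| ≤ C q * dist p.2 q.1.2 := hlip q _ _
        _ ≤ C q * (a q / (C q + 1)) :=
            mul_le_mul_of_nonneg_left (le_of_lt hd2) (hC0 q)
        _ ≤ a q := hCa
    have e3 : 3 * a q = |EV (N q) q.1.1 - EV (N q) q.1.2| := by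
      simp only [ha]
      ring
    have tri : |EV (N q) q.1.1 - EV (N q) q.1.2|
        ≤ |EV (N q) q.1.1 - EV (N q) p.1| + |EV (N q) p.1 - EV (N q) p.2|
          + |EV (N q) p.2 - EV (N q) q.1.2| := by
      calc |EV (N q) q.1.1 - EV (N q) q.1.2|
          ≤ |EV (N q) q.1.1 - EV (N q) p.2| + |EV (N q) p.2 - EV (N q) q.1.2| :=
            abs_sub_le _ _ _
        _ ≤ (|EV (N q) q.1.1 - EV (N q) p.1| + |EV (N q) p.1 - EV (N q) p.2|)
            + |EV (N q) p.2 - EV (N q) q.1.2| := by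
            have := abs_sub_le (EV (N q) q.1.1) (EV (N q) p.1) (EV (N q) p.2)
            linarith
    rw [abs_sub_comm (EV (N q) q.1.1) (EV (N q) p.1)] at tri
    linarith
  -- uniform positive separation over the finite cover
  set η : ℝ := if h : t.Nonempty then (t.image a).min' (h.image a) else 1 with hη
  have hη0 : 0 < η := by
    rw [hη]
    split_ifs with h
    · obtain ⟨q, _, heq⟩ := Finset.mem_image.1 ((t.image a).min'_mem (h.image a))
      rw [← heq]
      exact ha0 q
    · exact one_pos
  have hηle : ∀ q ∈ t, η ≤ a q := by
    intro q hq
    rw [hη, dif_pos ⟨q, hq⟩]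
    exact Finset.min'_le _ _ (Finset.mem_image_of_mem a hq)
  clear_value η
  -- feature map
  set F : ι → EuclideanSpace ℝ {q // q ∈ t} := fun i =>
    (WithLp.equiv 2 ({q // q ∈ t} → ℝ)).symm (fun s => EV (N s.1) i) with hF
  set M : ℝ := 2 * B / η + 1 with hM
  have hM0 : 0 ≤ M := by
    have := div_nonneg (by linarith : (0:ℝ) ≤ 2 * B) hη0.le
    rw [hM]
    linarith
  clear_value M
  have hmaster : ∀ i j, f j - f i ≤ ε / 2 + M * dist (F j) (F i) := by
    intro i j
    by_cases hd : dist i j < δ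
    · have hh := hδ hd
      rw [Real.dist_eq] at hh
      have h1 : f j - f i ≤ |f i - f j| := by
        rw [abs_sub_comm]
        exact le_abs_self _
      have h2 : (0:ℝ) ≤ M * dist (F j) (F i) := mul_nonneg hM0 dist_nonneg
      linarith only [h1, hh, h2]
    · push_neg at hd
      obtain ⟨q, hqt, hq⟩ := hsep (i, j) hd
      have hcd : η ≤ dist (F j) (F i) := by
        have hc1 : dist (F j ⟨q, hqt⟩) (F i ⟨q, hqt⟩)
            = |EV (N q) j - EV (N q) i| := Real.dist_eq _ _
        calc η ≤ a q := hηle q hqt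
          _ ≤ |EV (N q) i - EV (N q) j| := hq
          _ = |EV (N q) j - EV (N q) i| := abs_sub_comm _ _
          _ = dist (F j ⟨q, hqt⟩) (F i ⟨q, hqt⟩) := hc1.symm
          _ ≤ dist (F j) (F i) := euclid_coord_dist_le _ _ _
      have h2B : f j - f i ≤ 2 * B := by
        have hi := abs_le.1 (hB i)
        have hj := abs_le.1 (hB j)
        linarith
      have hd2 : 2 * B ≤ M * dist (F j) (F i) := by
        calc 2 * B = (2 * B / η) * η := by field_simp
          _ ≤ (2 * B / η) * dist (F j) (F i) :=
              mul_le_mul_of_nonneg_left hcd (div_nonneg (by linarith) hη0.le)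
          _ ≤ M * dist (F j) (F i) := by
              refine mul_le_mul_of_nonneg_right ?_ dist_nonneg
              rw [hM]
              linarith
      linarith only [h2B, hd2, hε]
  -- the continuous readout function
  set g : EuclideanSpace ℝ {q // q ∈ t} → ℝ :=
    fun v => sSup (Set.range fun j => f j - M * dist (F j) v) with hg
  have hbdd : ∀ v : EuclideanSpace ℝ {q // q ∈ t},
      BddAbove (Set.range fun j => f j - M * dist (F j) v) := by
    intro v
    refine ⟨B, ?_⟩
    rintro r ⟨j, rfl⟩
    have h1 : f j ≤ B := le_trans (le_abs_self _) (hB j)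
    have h2 : (0:ℝ) ≤ M * dist (F j) v := mul_nonneg hM0 dist_nonneg
    simp only []
    linarith
  have hrne : ∀ v : EuclideanSpace ℝ {q // q ∈ t},
      (Set.range fun j => f j - M * dist (F j) v).Nonempty :=
    fun v => Set.range_nonempty _
  have hlow : ∀ i, f i ≤ g (F i) := by
    intro i
    have h1 : f i - M * dist (F i) (F i) ∈ Set.range fun j => f j - M * dist (F j) (F i) :=
      ⟨i, rfl⟩
    have h2 := le_csSup (hbdd (F i)) h1
    rwa [dist_self, mul_zero, sub_zero] at h2
  have hup : ∀ i, g (F i) ≤ f i + ε / 2 := by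
    intro i
    refine csSup_le (hrne _) ?_
    rintro r ⟨j, rfl⟩
    have := hmaster i j
    simp only []
    linarith
  have hglip' : ∀ v w, g v ≤ g w + M * dist v w := by
    intro v w
    refine csSup_le (hrne v) ?_
    rintro r ⟨j, rfl⟩
    have h1 : f j - M * dist (F j) w ≤ g w := le_csSup (hbdd w) ⟨j, rfl⟩
    have h2 : dist (F j) w ≤ dist (F j) v + dist v w := dist_triangle _ _ _
    have h3 := mul_le_mul_of_nonneg_left h2 hM0
    rw [mul_add] at h3
    simp only []
    linarith
  have hgcont : Continuous g := by
    refine LipschitzWith.continuous (K := M.toNNReal) ?_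
    apply LipschitzWith.of_dist_le_mul
    intro v w
    rw [Real.dist_eq, Real.coe_toNNReal _ hM0]
    refine abs_sub_le_iff.2 ⟨?_, ?_⟩
    · have := hglip' v w
      linarith
    · have := hglip' w v
      rw [dist_comm] at this
      linarith
  -- assemble the final MCNN
  set Ψ : ({q // q ∈ t} → ℝ) → ℝ :=
    fun u => g ((WithLp.equiv 2 ({q // q ∈ t} → ℝ)).symm u) with hΨdef
  have hΨc : Continuous Ψ := hgcont.comp (PiLp.continuous_toLp _ _)
  refine ⟨cN (fun s : {q // q ∈ t} => N s.1) Ψ hΨc, ?_⟩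
  intro i
  have heval : mcnnEval (cN (fun s : {q // q ∈ t} => N s.1) Ψ hΨc) (m i) (μ i) (ℓ i)
      = g (F i) := by
    rw [cN_eval]
  have hl := hlow i
  have hu := hup i
  rw [heval]
  rw [abs_sub_lt_iff]
  constructor
  · linarith
  · linarith


end WLGW
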